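/- Let f : ℂ → ℂ be an entire function with Taylor coefficients c_n, let C > 0 and ρ > 0, and suppose |c_n| ≤ (e·C·ρ/n)^{n/ρ} for all n ≥ 1. Then limsup_{r→∞} (log M_f(r))/r^ρ ≤ C; in particular, for every ε > 0 there exists r₀ such that M_f(r) ≤ exp((C+ε)·r^ρ) for all r ≥ r₀. -/

import Mathlib

open Filter

private lemma key1' {x a : ℝ} (hx : 0 < x) (ha : 0 < a) : x * (1 + Real.log (a / x)) ≤ a := by
  have h := Real.log_le_sub_one_of_pos (div_pos ha hx)
  have h2 : x * (a / x - 1) = a - x := by field_simp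
  nlinarith [mul_le_mul_of_nonneg_left h hx.le]

private lemma termA' {C ρ r : ℝ} (hC : 0 < C) (hρ : 0 < ρ) (hr : 0 < r) {n : ℕ} (hn : 1 ≤ n) :
    (Real.exp 1 * C * ρ / n) ^ ((n : ℝ) / ρ) * r ^ n ≤ Real.exp (C * r ^ ρ) := by
  have hn' : (0:ℝ) < n := by exact_mod_cast hn
  have hA : 0 < Real.exp 1 * C * ρ / n := by positivity
  rw [Real.rpow_def_of_pos hA]
  have hrn : r ^ n = Real.exp ((n : ℝ) * Real.log r) := by
    rw [← Real.log_pow, Real.exp_log (pow_pos hr n)]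
  rw [hrn, ← Real.exp_add, Real.exp_le_exp]
  have hkey := key1' (x := (n : ℝ) / ρ) (a := C * r ^ ρ) (by positivity) (by positivity)
  have hlogA : Real.log (Real.exp 1 * C * ρ / n) = 1 + Real.log C + Real.log ρ - Real.log n := by
    rw [Real.log_div (by positivity) hn'.ne', Real.log_mul (by positivity) hρ.ne',
      Real.log_mul (Real.exp_ne_zero 1) hC.ne', Real.log_exp]
  have hlogax : Real.log (C * r ^ ρ / ((n : ℝ) / ρ)) =
      Real.log C + ρ * Real.log r + Real.log ρ - Real.log n := by
    rw [Real.log_div (by positivity) (by positivity), Real.log_mul hC.ne' (by positivity),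
      Real.log_rpow hr, Real.log_div hn'.ne' hρ.ne']
    ring
  calc Real.log (Real.exp 1 * C * ρ / n) * ((n : ℝ) / ρ) + (n : ℝ) * Real.log r
      = (n : ℝ) / ρ * (1 + Real.log (C * r ^ ρ / ((n : ℝ) / ρ))) := by
        rw [hlogA, hlogax]; field_simp; ring
    _ ≤ C * r ^ ρ := hkey

private lemma termB' {C ρ r : ℝ} (hC : 0 < C) (hρ : 0 < ρ) (hr : 0 < r) {n : ℕ}
    (hn : Real.exp 1 * C * ρ * (2 * r) ^ ρ ≤ n) :
    (Real.exp 1 * C * ρ / n) ^ ((n : ℝ) / ρ) * r ^ n ≤ (1 / 2) ^ n := by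
  have hpos : (0:ℝ) < Real.exp 1 * C * ρ * (2 * r) ^ ρ := by positivity
  have hn' : (0:ℝ) < n := lt_of_lt_of_le hpos hn
  have hA : 0 < Real.exp 1 * C * ρ / n := by positivity
  have h1 : (Real.exp 1 * C * ρ / n) ^ ((n : ℝ) / ρ)
      = ((Real.exp 1 * C * ρ / n) ^ ((1:ℝ) / ρ)) ^ n := by
    rw [← Real.rpow_natCast ((Real.exp 1 * C * ρ / n) ^ ((1:ℝ)/ρ)) n, ← Real.rpow_mul hA.le]
    congr 1
    field_simp
  rw [h1, ← mul_pow]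
  apply pow_le_pow_left₀ (by positivity)
  have h2 : Real.exp 1 * C * ρ / n ≤ (1 / (2 * r)) ^ ρ := by
    have h' : Real.exp 1 * C * ρ / (n:ℝ) ≤
        Real.exp 1 * C * ρ / (Real.exp 1 * C * ρ * (2 * r) ^ ρ) :=
      div_le_div_of_nonneg_left (by positivity) hpos hn
    refine h'.trans (le_of_eq ?_)
    rw [Real.div_rpow (by norm_num) (by positivity), Real.one_rpow]
    rw [mul_div_assoc, div_mul_eq_div_div]
    field_simp
  have h3 : (Real.exp 1 * C * ρ / n) ^ ((1:ℝ)/ρ) ≤ 1 / (2 * r) := by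
    calc (Real.exp 1 * C * ρ / n) ^ ((1:ℝ)/ρ) ≤ ((1 / (2 * r)) ^ ρ) ^ ((1:ℝ)/ρ) :=
          Real.rpow_le_rpow hA.le h2 (by positivity)
      _ = 1 / (2 * r) := by
          rw [← Real.rpow_mul (by positivity), mul_one_div_cancel hρ.ne', Real.rpow_one]
  calc (Real.exp 1 * C * ρ / n) ^ ((1:ℝ)/ρ) * r ≤ (1 / (2 * r)) * r :=
        mul_le_mul_of_nonneg_right h3 hr.le
    _ = 1 / 2 := by field_simp

open Finset in
private lemma sum_bound' {C ρ r : ℝ} (hC : 0 < C) (hρ : 0 < ρ) (hr : 0 < r)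
    (c : ℕ → ℂ)
    (hc : ∀ n : ℕ, 1 ≤ n →
      ‖c n‖ ≤ (Real.exp 1 * C * ρ / (n : ℝ)) ^ ((n : ℝ) / ρ))
    (s : Finset ℕ) :
    ∑ n ∈ s, ‖c n‖ * r ^ n ≤
      ‖c 0‖ +
        ((⌈Real.exp 1 * C * ρ * (2 * r) ^ ρ⌉₊ + 1 : ℕ) : ℝ) * Real.exp (C * r ^ ρ) + 2 := by
  set N : ℕ := ⌈Real.exp 1 * C * ρ * (2 * r) ^ ρ⌉₊ + 1 with hN
  have hN1 : 1 ≤ N := Nat.le_add_left 1 _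
  obtain ⟨M, hM⟩ := s.exists_nat_subset_range
  set M' : ℕ := max M N with hM'
  have hsub : s ⊆ range M' := hM.trans (range_subset_range.2 (le_max_left _ _))
  have h0 : ∑ n ∈ s, ‖c n‖ * r ^ n ≤ ∑ n ∈ range M', ‖c n‖ * r ^ n :=
    sum_le_sum_of_subset_of_nonneg hsub (fun n _ _ => by positivity)
  refine h0.trans ?_
  have hNM : N ≤ M' := le_max_right _ _
  rw [range_eq_Ico, ← sum_Ico_consecutive _ (Nat.zero_le N) hNM,
    ← sum_Ico_consecutive _ (Nat.zero_le 1) hN1]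
  have e0 : ∑ n ∈ Ico 0 1, ‖c n‖ * r ^ n = ‖c 0‖ := by
    simp
  have e1 : ∑ n ∈ Ico 1 N, ‖c n‖ * r ^ n ≤ (N : ℝ) * Real.exp (C * r ^ ρ) := by
    calc ∑ n ∈ Ico 1 N, ‖c n‖ * r ^ n
        ≤ ∑ n ∈ Ico 1 N, Real.exp (C * r ^ ρ) := by
          refine sum_le_sum fun n hn => ?_
          have hn1 : 1 ≤ n := (mem_Ico.1 hn).1
          calc ‖c n‖ * r ^ n
              ≤ (Real.exp 1 * C * ρ / n) ^ ((n : ℝ) / ρ) * r ^ n :=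
                mul_le_mul_of_nonneg_right (hc n hn1) (pow_nonneg hr.le n)
            _ ≤ Real.exp (C * r ^ ρ) := termA' hC hρ hr hn1
      _ = ((N - 1 : ℕ) : ℝ) * Real.exp (C * r ^ ρ) := by
          rw [sum_const, Nat.card_Ico, nsmul_eq_mul]
      _ ≤ (N : ℝ) * Real.exp (C * r ^ ρ) := by
          have : ((N - 1 : ℕ) : ℝ) ≤ (N : ℝ) := by exact_mod_cast Nat.sub_le N 1
          exact mul_le_mul_of_nonneg_right this (Real.exp_nonneg _)
  have e2 : ∑ n ∈ Ico N M', ‖c n‖ * r ^ n ≤ 2 := by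
    calc ∑ n ∈ Ico N M', ‖c n‖ * r ^ n
        ≤ ∑ n ∈ Ico N M', ((1:ℝ) / 2) ^ n := by
          refine sum_le_sum fun n hn => ?_
          have hnN : N ≤ n := (mem_Ico.1 hn).1
          have hn1 : 1 ≤ n := hN1.trans hnN
          have hx : Real.exp 1 * C * ρ * (2 * r) ^ ρ ≤ (n : ℝ) := by
            calc Real.exp 1 * C * ρ * (2 * r) ^ ρ
                ≤ (⌈Real.exp 1 * C * ρ * (2 * r) ^ ρ⌉₊ : ℝ) := Nat.le_ceil _
              _ ≤ (n : ℝ) := by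
                  exact_mod_cast le_trans (Nat.le_succ _) hnN
          calc ‖c n‖ * r ^ n
              ≤ (Real.exp 1 * C * ρ / n) ^ ((n : ℝ) / ρ) * r ^ n :=
                mul_le_mul_of_nonneg_right (hc n hn1) (pow_nonneg hr.le n)
            _ ≤ ((1:ℝ) / 2) ^ n := termB' hC hρ hr hx
      _ ≤ ∑ n ∈ range M', ((1:ℝ) / 2) ^ n := by
          refine sum_le_sum_of_subset_of_nonneg ?_ (fun n _ _ => by positivity)
          rw [range_eq_Ico]
          exact Ico_subset_Ico (Nat.zero_le _) le_rfl
      _ ≤ 2 := sum_geometric_two_le M'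
  rw [e0]
  linarith

private lemma fz_bound' {r : ℝ} (c : ℕ → ℂ) (f : ℂ → ℂ)
    (hf : ∀ z : ℂ, HasSum (fun n : ℕ => c n * z ^ n) (f z))
    {B : ℝ}
    (hB : ∀ s : Finset ℕ, ∑ n ∈ s, ‖c n‖ * r ^ n ≤ B)
    {z : ℂ} (hz : ‖z‖ = r) :
    ‖f z‖ ≤ B := by
  have ht : Filter.Tendsto (fun s : Finset ℕ => ∑ n ∈ s, c n * z ^ n)
      Filter.atTop (nhds (f z)) := hf z
  have ht2 := ht.norm
  refine le_of_tendsto' ht2 fun s => ?_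
  calc ‖∑ n ∈ s, c n * z ^ n‖ ≤ ∑ n ∈ s, ‖c n * z ^ n‖ := norm_sum_le _ _
    _ = ∑ n ∈ s, ‖c n‖ * r ^ n := by
        refine Finset.sum_congr rfl fun n _ => ?_
        rw [norm_mul, norm_pow, hz]
    _ ≤ B := hB s

private lemma ev_lin_le_exp' (A K : ℝ) {ε ρ : ℝ} (hε : 0 < ε) (hρ : 0 < ρ) :
    ∀ᶠ r : ℝ in atTop, A + K * r ^ ρ ≤ Real.exp (ε * r ^ ρ) := by
  suffices H : ∀ᶠ t : ℝ in atTop, A + K * t ≤ Real.exp (ε * t) by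
    exact (tendsto_rpow_atTop hρ).eventually H
  have h0 : Tendsto (fun t : ℝ => ε * t) atTop atTop :=
    Tendsto.const_mul_atTop hε tendsto_id
  have h1 : Tendsto (fun t : ℝ => Real.exp (ε * t) / (ε * t)) atTop atTop := by
    have := (Real.tendsto_exp_div_pow_atTop 1).comp h0
    simpa [Function.comp_def] using this
  filter_upwards [h1.eventually_ge_atTop ((|A| + |K| + 1) / ε), eventually_ge_atTop 1]
    with t h2 h3
  have htpos : 0 < ε * t := by positivity
  rw [div_le_div_iff₀ hε htpos] at h2
  have h4 : (|A| + |K| + 1) * t ≤ Real.exp (ε * t) := by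
    refine le_of_mul_le_mul_right ?_ hε
    nlinarith
  nlinarith [le_abs_self A, le_abs_self K, abs_nonneg A, abs_nonneg K]

/-- Example 3.2, converse direction: if `f` is entire, `C, ρ > 0`, and
`|c_n| ≤ (e·C·ρ/n)^{n/ρ}` for all `n ≥ 1`, then
`limsup_{r→∞} (log M_f(r))/r^ρ ≤ C`; in particular for every `ε > 0` there is `r₀`
with `M_f(r) ≤ exp((C+ε)·r^ρ)` for all `r ≥ r₀`. -/
theorem type_recovery_from_coefficient_decay
    (f : ℂ → ℂ) (c : ℕ → ℂ)
    (hf : ∀ z : ℂ, HasSum (fun n : ℕ => c n * z ^ n) (f z))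
    (C ρ : ℝ) (hC : 0 < C) (hρ : 0 < ρ)
    (hc : ∀ n : ℕ, 1 ≤ n →
      ‖c n‖ ≤ (Real.exp 1 * C * ρ / (n : ℝ)) ^ ((n : ℝ) / ρ)) :
    Filter.limsup
        (fun r : ℝ =>
          Real.log (sSup {x : ℝ | ∃ z : ℂ, ‖z‖ = r ∧ x = ‖f z‖}) /
            r ^ ρ)
        Filter.atTop ≤ C ∧
    ∀ ε : ℝ, 0 < ε → ∃ r₀ : ℝ, ∀ r : ℝ, r₀ ≤ r →
      sSup {x : ℝ | ∃ z : ℂ, ‖z‖ = r ∧ x = ‖f z‖}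
        ≤ Real.exp ((C + ε) * r ^ ρ) := by
  set Mf : ℝ → ℝ :=
    fun r => sSup {x : ℝ | ∃ z : ℂ, ‖z‖ = r ∧ x = ‖f z‖} with hMf
  -- key eventual bound
  have key : ∀ ε : ℝ, 0 < ε → ∃ r₀ : ℝ, 1 ≤ r₀ ∧ ∀ r : ℝ, r₀ ≤ r →
      0 ≤ Mf r ∧ Mf r ≤ Real.exp ((C + ε) * r ^ ρ) := by
    intro ε hε
    have hev := ev_lin_le_exp' (‖c 0‖ + 2)
      (Real.exp 1 * C * ρ * 2 ^ ρ + 2) hε hρ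
    obtain ⟨a, ha⟩ := eventually_atTop.1 (hev.and (eventually_ge_atTop 1))
    refine ⟨max a 1, le_max_right _ _, fun r hr => ?_⟩
    obtain ⟨hlin, hr1⟩ := ha r ((le_max_left a 1).trans hr)
    have hrpos : (0:ℝ) < r := lt_of_lt_of_le one_pos hr1
    have hrρ1 : (1:ℝ) ≤ r ^ ρ := Real.one_le_rpow hr1 hρ.le
    -- bound each |f z| for |z| = r
    set N : ℕ := ⌈Real.exp 1 * C * ρ * (2 * r) ^ ρ⌉₊ + 1 with hNdef
    have hBdd : ∀ x ∈ {x : ℝ | ∃ z : ℂ, ‖z‖ = r ∧ x = ‖f z‖},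
        x ≤ Real.exp ((C + ε) * r ^ ρ) := by
      rintro x ⟨z, hz, rfl⟩
      have h1 : ‖f z‖ ≤
          ‖c 0‖ + (N : ℝ) * Real.exp (C * r ^ ρ) + 2 :=
        fz_bound' c f hf (sum_bound' hC hρ hrpos c hc) hz
      refine h1.trans ?_
      -- N ≤ e*C*ρ*(2r)^ρ + 2 ≤ (e*C*ρ*2^ρ + 2) * r^ρ
      have hNle : (N : ℝ) ≤ (Real.exp 1 * C * ρ * 2 ^ ρ + 2) * r ^ ρ := by
        have h2 : ((⌈Real.exp 1 * C * ρ * (2 * r) ^ ρ⌉₊ : ℕ) : ℝ) <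
            Real.exp 1 * C * ρ * (2 * r) ^ ρ + 1 :=
          Nat.ceil_lt_add_one (by positivity)
        have h3 : (2 * r) ^ ρ = 2 ^ ρ * r ^ ρ :=
          Real.mul_rpow (by norm_num) hrpos.le
        have h4 : (N : ℝ) = ((⌈Real.exp 1 * C * ρ * (2 * r) ^ ρ⌉₊ : ℕ) : ℝ) + 1 := by
          push_cast [hNdef]; ring
        have h5 : (0:ℝ) ≤ Real.exp 1 * C * ρ * 2 ^ ρ := by positivity
        have h6 : Real.exp 1 * C * ρ * (2 * r) ^ ρ =
            Real.exp 1 * C * ρ * 2 ^ ρ * r ^ ρ := by rw [h3]; ring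
        rw [h4]
        nlinarith [hrρ1, h2, h6]
      have hexp1 : (1:ℝ) ≤ Real.exp (C * r ^ ρ) :=
        Real.one_le_exp (by positivity)
      calc ‖c 0‖ + (N : ℝ) * Real.exp (C * r ^ ρ) + 2
          ≤ (‖c 0‖ + 2 + (Real.exp 1 * C * ρ * 2 ^ ρ + 2) * r ^ ρ) *
              Real.exp (C * r ^ ρ) := by
            have hc0 : (0:ℝ) ≤ ‖c 0‖ := norm_nonneg _
            have hN0 : (0:ℝ) ≤ (N : ℝ) := Nat.cast_nonneg _
            nlinarith [mul_le_mul_of_nonneg_right hNle (Real.exp_nonneg (C * r ^ ρ))]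
        _ ≤ Real.exp (ε * r ^ ρ) * Real.exp (C * r ^ ρ) := by
            refine mul_le_mul_of_nonneg_right ?_ (Real.exp_nonneg _)
            linarith
        _ = Real.exp ((C + ε) * r ^ ρ) := by
            rw [← Real.exp_add]; ring_nf
    constructor
    · -- 0 ≤ Mf r
      have hmem : ‖f (r : ℂ)‖ ∈
          {x : ℝ | ∃ z : ℂ, ‖z‖ = r ∧ x = ‖f z‖} := by
        exact ⟨(r : ℂ), by rw [Complex.norm_real, Real.norm_eq_abs, abs_of_nonneg hrpos.le], rfl⟩
      have hbdd : BddAbove {x : ℝ | ∃ z : ℂ, ‖z‖ = r ∧ x = ‖f z‖} :=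
        ⟨Real.exp ((C + ε) * r ^ ρ), hBdd⟩
      exact le_trans (norm_nonneg _) (le_csSup hbdd hmem)
    · exact Real.sSup_le hBdd (Real.exp_nonneg _)
  constructor
  · -- limsup part
    rw [Filter.limsup_eq]
    by_cases hb : BddBelow {a : ℝ | ∀ᶠ r in atTop,
        Real.log (Mf r) / r ^ ρ ≤ a}
    · refine le_of_forall_pos_le_add fun ε hε => csInf_le hb ?_
      obtain ⟨r₀, hr₀1, hr₀⟩ := key ε hε
      refine eventually_atTop.2 ⟨r₀, fun r hr => ?_⟩
      obtain ⟨hM0, hMle⟩ := hr₀ r hr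
      have hr1 : (1:ℝ) ≤ r := hr₀1.trans hr
      have hrρ : (0:ℝ) < r ^ ρ :=
        Real.rpow_pos_of_pos (lt_of_lt_of_le one_pos hr1) ρ
      have hlog : Real.log (Mf r) ≤ (C + ε) * r ^ ρ := by
        rcases eq_or_lt_of_le hM0 with h | h
        · rw [← h, Real.log_zero]; positivity
        · calc Real.log (Mf r) ≤ Real.log (Real.exp ((C + ε) * r ^ ρ)) :=
              Real.log_le_log h hMle
            _ = (C + ε) * r ^ ρ := Real.log_exp _
      rw [div_le_iff₀ hrρ]
      exact hlog
    · rw [Real.sInf_of_not_bddBelow hb]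
      exact hC.le
  · intro ε hε
    obtain ⟨r₀, _, hr₀⟩ := key ε hε
    exact ⟨r₀, fun r hr => (hr₀ r hr).2⟩
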